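/- Suppose {a^1 >_lex ⋯ >_lex a^n} is a maximal clique of 𝒢(d,α), a^{n+1} ∈ V_{n,d}^α satisfies that (a^n, a^{n+1}) is sorted, and Δ(a^1,a^2) = Δ(a^n, a^{n+1}). Then {a^2 >_lex ⋯ >_lex a^n >_lex a^{n+1}} is also a maximal clique of 𝒢. -/
import Mathlib


/-- The set `V_{n,d}^α` of nonnegative integer tuples with coordinate sum `d`
and coordinatewise bound `α`. -/
def VT (n d : ℕ) (α : Fin n → ℕ) : Set (Fin n → ℕ) :=
  {c | (∑ i, c i) = d ∧ ∀ i, c i ≤ α i}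

/-- `a >_lex b`: the leftmost nonzero entry of `a - b` is positive. -/
def lexGT {n : ℕ} (a b : Fin n → ℕ) : Prop :=
  ∃ i : Fin n, (∀ j, j < i → a j = b j) ∧ b i < a i

/-- `sort(a,b) = (a,b)` for Sturmfels' sorting operator: for every `t`, the prefix
sum of `a` up to `t` equals the ceiling of half the prefix sum of `a + b`. -/
def sortedPair {n : ℕ} (a b : Fin n → ℕ) : Prop :=
  ∀ t : Fin n, 2 * (∑ i ∈ Finset.Iic t, a i)
    = (∑ i ∈ Finset.Iic t, (a i + b i)) + (∑ i ∈ Finset.Iic t, (a i + b i)) % 2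

/-- The sorting signature set `Δ(a,b)` of a sorted pair, recorded (0-indexed) as the
set of positions `t` where the prefix sum of `b` is one less than that of `a`. -/
def sigSet {n : ℕ} (a b : Fin n → ℕ) : Finset (Fin n) :=
  Finset.univ.filter (fun t => (∑ i ∈ Finset.Iic t, b i) + 1 = ∑ i ∈ Finset.Iic t, a i)

/-- Adjacency in the sorting graph `𝒢(d,α)`. -/
def adjG {n : ℕ} (a b : Fin n → ℕ) : Prop :=
  (lexGT a b ∧ sortedPair a b) ∨ (lexGT b a ∧ sortedPair b a)

/-- A clique of the sorting graph `𝒢(d,α)`. -/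
def isClique (n d : ℕ) (α : Fin n → ℕ) (S : Finset (Fin n → ℕ)) : Prop :=
  (↑S ⊆ VT n d α) ∧ ∀ a ∈ S, ∀ b ∈ S, a ≠ b → adjG a b

/-- A maximal clique of the sorting graph `𝒢(d,α)`. -/
def isMaxClique (n d : ℕ) (α : Fin n → ℕ) (S : Finset (Fin n → ℕ)) : Prop :=
  isClique n d α S ∧ ∀ T, isClique n d α T → S ⊆ T → S = T

namespace Stmt8Aux

def PS {n : ℕ} (a : Fin n → ℕ) (m : ℕ) : ℕ :=
  ∑ i ∈ Finset.range m, (if h : i < n then a ⟨i, h⟩ else 0)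

variable {n : ℕ}

lemma PS_zero (a : Fin n → ℕ) : PS a 0 = 0 := by simp [PS]

lemma PS_succ (a : Fin n → ℕ) {m : ℕ} (h : m < n) :
    PS a (m + 1) = PS a m + a ⟨m, h⟩ := by
  simp [PS, Finset.sum_range_succ, h]

lemma PS_succ_ge (a : Fin n → ℕ) {m : ℕ} (h : ¬ m < n) :
    PS a (m + 1) = PS a m := by
  simp [PS, Finset.sum_range_succ, h]

lemma PS_stab (a : Fin n → ℕ) {m : ℕ} (h : n ≤ m) : PS a m = PS a n := by
  induction m, h using Nat.le_induction with
  | base => rfl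
  | succ m hm ih => rw [PS_succ_ge a (by omega), ih]

lemma sum_Iic (a : Fin n → ℕ) (t : Fin n) :
    ∑ i ∈ Finset.Iic t, a i = PS a (t.1 + 1) := by
  have h1 : Finset.Iic t = Finset.filter (fun i : Fin n => i.1 < t.1 + 1) Finset.univ := by
    ext i
    simp only [Finset.mem_Iic, Finset.mem_filter, Finset.mem_univ, true_and, Fin.le_def]
    omega
  rw [h1, Finset.sum_filter]
  have h2 : ∀ i : Fin n, (if i.1 < t.1 + 1 then a i else 0)
      = (fun m => if m < t.1 + 1 then (if h : m < n then a ⟨m, h⟩ else 0) else 0) i.1 := by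
    intro i; simp [i.isLt]
  calc ∑ i : Fin n, (if i.1 < t.1 + 1 then a i else 0)
      = ∑ i : Fin n, (fun m => if m < t.1 + 1 then (if h : m < n then a ⟨m, h⟩ else 0) else 0) i.1 :=
        Finset.sum_congr rfl (fun i _ => h2 i)
    _ = ∑ m ∈ Finset.range n, (if m < t.1 + 1 then (if h : m < n then a ⟨m, h⟩ else 0) else 0) :=
        Fin.sum_univ_eq_sum_range (fun m => if m < t.1 + 1 then (if h : m < n then a ⟨m, h⟩ else 0) else 0) n
    _ = PS a (t.1 + 1) := by
        rw [PS, ← Finset.sum_subset (Finset.range_subset_range.2 t.2)]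
        · exact Finset.sum_congr rfl fun m hm => by simp [Finset.mem_range.1 hm]
        · intro m _ hm
          rw [if_neg (by simpa using hm)]

lemma sum_univ (a : Fin n → ℕ) : ∑ i, a i = PS a n := by
  rw [PS, ← Fin.sum_univ_eq_sum_range (fun m => if h : m < n then a ⟨m, h⟩ else 0) n]
  exact Finset.sum_congr rfl fun i _ => by simp [i.isLt]

lemma sortedPair_PS {a b : Fin n → ℕ} (h : sortedPair a b) (m : ℕ) :
    PS b m ≤ PS a m ∧ PS a m ≤ PS b m + 1 := by
  induction m with
  | zero => simp [PS_zero]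
  | succ m ih =>
    by_cases hm : m < n
    · have ht := h ⟨m, hm⟩
      rw [Finset.sum_add_distrib, sum_Iic, sum_Iic] at ht
      simp only [Fin.val_mk] at ht
      omega
    · rw [PS_succ_ge a hm, PS_succ_ge b hm]; exact ih

lemma sorted_of_PS {a b : Fin n → ℕ}
    (h : ∀ m, 0 < m → m ≤ n → PS b m ≤ PS a m ∧ PS a m ≤ PS b m + 1) : sortedPair a b := by
  intro t
  rw [Finset.sum_add_distrib, sum_Iic, sum_Iic]
  have := h (t.1 + 1) (by omega) t.2
  omega

lemma PS_congr {a b : Fin n → ℕ} {m : ℕ}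
    (h : ∀ j (hj : j < n), j < m → a ⟨j, hj⟩ = b ⟨j, hj⟩) : PS a m = PS b m := by
  unfold PS
  refine Finset.sum_congr rfl fun j hj => ?_
  rcases Nat.lt_or_ge j n with h1 | h1
  · rw [dif_pos h1, dif_pos h1]; exact h j h1 (Finset.mem_range.1 hj)
  · rw [dif_neg (by omega), dif_neg (by omega)]

lemma ne_of_PS {a b : Fin n → ℕ} {m : ℕ} (h : PS a m ≠ PS b m) : a ≠ b := by
  intro he; subst he; exact h rfl

lemma eq_of_PS {a b : Fin n → ℕ} (h : ∀ m, m ≤ n → PS a m = PS b m) : a = b :=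
  funext fun i => by
    have h1 := h i.1 (le_of_lt i.2)
    have h2 := h (i.1 + 1) i.2
    rw [PS_succ a i.2, PS_succ b i.2] at h2
    simp only [Fin.eta] at h2
    omega

lemma lexGT_ne {a b : Fin n → ℕ} (h : lexGT a b) : a ≠ b := by
  obtain ⟨i, _, hlt⟩ := h; intro he; subst he; omega

lemma lexGT_of_PS {a b : Fin n → ℕ} (hle : ∀ m, m ≤ n → PS b m ≤ PS a m)
    (hne : a ≠ b) : lexGT a b := by
  have hFne : (Finset.univ.filter fun i : Fin n => a i ≠ b i).Nonempty := by
    rcases Function.ne_iff.1 hne with ⟨i, hi⟩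
    exact ⟨i, Finset.mem_filter.2 ⟨Finset.mem_univ _, hi⟩⟩
  set i := Finset.min' _ hFne with hidef
  have himem := Finset.min'_mem _ hFne
  have hiprop : a i ≠ b i := (Finset.mem_filter.1 himem).2
  have hbefore : ∀ j, j < i → a j = b j := by
    intro j hj; by_contra hne'
    exact absurd (Finset.min'_le _ j (Finset.mem_filter.2 ⟨Finset.mem_univ _, hne'⟩))
      (not_le.2 hj)
  refine ⟨i, hbefore, ?_⟩
  have h1 : PS a i.1 = PS b i.1 :=
    PS_congr (fun j hj hjm => hbefore ⟨j, hj⟩ (by simpa [Fin.lt_def] using hjm))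
  have h2 := hle (i.1 + 1) i.2
  rw [PS_succ a i.2, PS_succ b i.2] at h2
  simp only [Fin.eta] at h2
  omega

lemma sorted_not_lexGT {a b : Fin n → ℕ} (hs : sortedPair a b) (hl : lexGT b a) : False := by
  obtain ⟨i, hbef, hlt⟩ := hl
  have h1 : PS b i.1 = PS a i.1 :=
    PS_congr (fun j hj hjm => hbef ⟨j, hj⟩ (by simpa [Fin.lt_def] using hjm))
  have h2 := (sortedPair_PS hs (i.1 + 1)).1
  rw [PS_succ a i.2, PS_succ b i.2] at h2
  simp only [Fin.eta] at h2
  omega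

lemma mem_sigSet {a b : Fin n → ℕ} {t : Fin n} :
    t ∈ sigSet a b ↔ PS b (t.1 + 1) + 1 = PS a (t.1 + 1) := by
  simp [sigSet, sum_Iic]

lemma adjG_symm {a b : Fin n → ℕ} (h : adjG a b) : adjG b a := by
  unfold adjG at h ⊢; exact h.symm

end Stmt8Aux

open Stmt8Aux in
/-- If `a^1 >_lex ⋯ >_lex a^n` is a maximal clique, `a^{n+1} ∈ V_{n,d}^α` with
`(a^n, a^{n+1})` sorted and `Δ(a^1,a^2) = Δ(a^n,a^{n+1})`, then
`a^2 >_lex ⋯ >_lex a^n >_lex a^{n+1}` is also a maximal clique. -/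
theorem stmt8 (n d : ℕ) (hn : 3 ≤ n) (α : Fin n → ℕ)
    (hα0 : 1 ≤ α ⟨0, by omega⟩) (hmono : Monotone α)
    (hαd : ∀ i, α i ≤ d) (hdα : d < ∑ i, α i)
    (A : Fin n → (Fin n → ℕ))
    (hdec : ∀ i j : Fin n, i < j → lexGT (A i) (A j))
    (hmax : isMaxClique n d α (Finset.image A Finset.univ))
    (a' : Fin n → ℕ) (ha' : a' ∈ VT n d α)
    (hlast : lexGT (A ⟨n - 1, by omega⟩) a')
    (hsort : sortedPair (A ⟨n - 1, by omega⟩) a')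
    (hΔ : sigSet (A ⟨0, by omega⟩) (A ⟨1, by omega⟩)
      = sigSet (A ⟨n - 1, by omega⟩) a') :
    (∀ i j : Fin n, i < j →
      lexGT ((fun i : Fin n => if h : i.1 + 1 < n then A ⟨i.1 + 1, h⟩ else a') i)
        ((fun i : Fin n => if h : i.1 + 1 < n then A ⟨i.1 + 1, h⟩ else a') j)) ∧
    isMaxClique n d α
      (Finset.image (fun i : Fin n => if h : i.1 + 1 < n then A ⟨i.1 + 1, h⟩ else a')
        Finset.univ) := by
    classical
  have hn0 : (0 : ℕ) < n := by omega
  have hn1 : (1 : ℕ) < n := by omega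
  have hnl : n - 1 < n := by omega
  -- basic facts
  have hAmem : ∀ i : Fin n, A i ∈ Finset.image A Finset.univ :=
    fun i => Finset.mem_image_of_mem A (Finset.mem_univ i)
  have hVT : ∀ i : Fin n, A i ∈ VT n d α := fun i => hmax.1.1 (hAmem i)
  have hPSd : ∀ i : Fin n, PS (A i) n = d := fun i => by
    rw [← sum_univ]; exact (hVT i).1
  have ha'd : PS a' n = d := by rw [← sum_univ]; exact ha'.1
  have hαpos : ∀ i : Fin n, 1 ≤ α i := by
    intro i
    have h0i : (⟨0, hn0⟩ : Fin n) ≤ i := by simp [Fin.le_def]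
    exact le_trans hα0 (hmono h0i)
  have hAne : ∀ i j : Fin n, i < j → A i ≠ A j := fun i j h => lexGT_ne (hdec i j h)
  have hsorted : ∀ i j : Fin n, i < j → sortedPair (A i) (A j) := by
    intro i j h
    rcases hmax.1.2 (A i) (hAmem i) (A j) (hAmem j) (hAne i j h) with ⟨_, hs⟩ | ⟨_, hs⟩
    · exact hs
    · exact (sorted_not_lexGT hs (hdec i j h)).elim
  have hchain : ∀ i j : Fin n, i ≤ j → ∀ m,
      PS (A j) m ≤ PS (A i) m ∧ PS (A i) m ≤ PS (A j) m + 1 := by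
    intro i j hij m
    rcases eq_or_lt_of_le hij with h | h
    · subst h; omega
    · exact sortedPair_PS (hsorted i j h) m
  have hilast : ∀ i : Fin n, i ≤ (⟨n - 1, hnl⟩ : Fin n) := fun i => by
    simp only [Fin.le_def]; omega
  have hzle : ∀ i : Fin n, (⟨0, hn0⟩ : Fin n) ≤ i := fun i => by simp [Fin.le_def]
  -- no clique extension
  have hext : ∀ c : Fin n → ℕ, c ∈ VT n d α → (∀ i : Fin n, adjG (A i) c) →
      (∀ i : Fin n, c ≠ A i) → False := by
    intro c hcVT hadj hcne
    have hclT : isClique n d α (insert c (Finset.image A Finset.univ)) := by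
      constructor
      · intro x hx
        simp only [Finset.coe_insert, Set.mem_insert_iff] at hx
        rcases hx with rfl | hx
        · exact hcVT
        · exact hmax.1.1 hx
      · intro x hx y hy hxy
        simp only [Finset.mem_insert] at hx hy
        rcases hx with rfl | hx <;> rcases hy with rfl | hy
        · exact absurd rfl hxy
        · obtain ⟨i, _, rfl⟩ := Finset.mem_image.1 hy; exact adjG_symm (hadj i)
        · obtain ⟨i, _, rfl⟩ := Finset.mem_image.1 hx; exact hadj i
        · exact hmax.1.2 x hx y hy hxy
    have heq := hmax.2 _ hclT (Finset.subset_insert _ _)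
    have hcmem : c ∈ Finset.image A Finset.univ := by
      rw [heq]; exact Finset.mem_insert_self _ _
    obtain ⟨i, _, hi⟩ := Finset.mem_image.1 hcmem
    exact hcne i hi.symm
  -- squeeze on free positions
  have hsq : ∀ m, PS (A ⟨0, hn0⟩) m = PS (A ⟨n - 1, hnl⟩) m →
      ∀ i : Fin n, PS (A i) m = PS (A ⟨n - 1, hnl⟩) m := by
    intro m hf i
    have h1 := hchain ⟨0, hn0⟩ i (hzle i) m
    have h2 := hchain i ⟨n - 1, hnl⟩ (hilast i) m
    omega
  -- down move
  have hdown : ∀ p q : ℕ, ∀ hp : p < n, ∀ hq : q < n, p < q →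
      (∀ m, p < m → m ≤ q → PS (A ⟨0, hn0⟩) m = PS (A ⟨n - 1, hnl⟩) m) →
      1 ≤ A ⟨n - 1, hnl⟩ ⟨p, hp⟩ → A ⟨n - 1, hnl⟩ ⟨q, hq⟩ < α ⟨q, hq⟩ → False := by
    intro p q hp hq hpq hfree hp1 hqα
    have hqp : ¬ q = p := by omega
    set c : Fin n → ℕ := fun i =>
      if i.1 = p then A ⟨n - 1, hnl⟩ i - 1
      else if i.1 = q then A ⟨n - 1, hnl⟩ i + 1 else A ⟨n - 1, hnl⟩ i with hc
    have hPSc : ∀ m, PS c m + (if p < m ∧ m ≤ q then 1 else 0) = PS (A ⟨n - 1, hnl⟩) m := by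
      intro m
      induction m with
      | zero => simp [PS_zero]
      | succ m ih =>
        by_cases hm : m < n
        · rw [PS_succ c hm, PS_succ (A ⟨n - 1, hnl⟩) hm]
          have hcm : c ⟨m, hm⟩ + (if m = p then 1 else 0)
              = A ⟨n - 1, hnl⟩ ⟨m, hm⟩ + (if m = q then 1 else 0) := by
            by_cases h1 : m = p
            · have hcv : c ⟨m, hm⟩ = A ⟨n - 1, hnl⟩ ⟨m, hm⟩ - 1 := by
                simp [hc, h1]
              have h2 : ¬ (m = q) := by omega
              have h3 : 1 ≤ A ⟨n - 1, hnl⟩ ⟨m, hm⟩ := by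
                subst h1; exact hp1
              rw [if_pos h1, if_neg h2, hcv]; omega
            · by_cases h2 : m = q
              · have hcv : c ⟨m, hm⟩ = A ⟨n - 1, hnl⟩ ⟨m, hm⟩ + 1 := by
                  simp [hc, h1, h2, hqp]
                rw [if_neg h1, if_pos h2, hcv]
              · have hcv : c ⟨m, hm⟩ = A ⟨n - 1, hnl⟩ ⟨m, hm⟩ := by
                  simp [hc, h1, h2, hqp]
                rw [if_neg h1, if_neg h2, hcv]
          have hind : (if p < m ∧ m ≤ q then 1 else 0) + (if m = p then 1 else 0)
              = (if p < m + 1 ∧ m + 1 ≤ q then 1 else 0) + (if m = q then 1 else 0) := by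
            split_ifs <;> omega
          omega
        · rw [PS_succ_ge c hm, PS_succ_ge _ hm]
          have h1 : (if p < m ∧ m ≤ q then 1 else 0) = 0 := by
            rw [if_neg]; omega
          have h2 : (if p < m + 1 ∧ m + 1 ≤ q then 1 else 0) = 0 := by
            rw [if_neg]; omega
          omega
    have hcVT : c ∈ VT n d α := by
      constructor
      · rw [sum_univ]
        have h0 := hPSc n
        rw [if_neg (by omega)] at h0
        have := hPSd ⟨n - 1, hnl⟩
        omega
      · intro i
        by_cases h1 : i.1 = p
        · have hcv : c i = A ⟨n - 1, hnl⟩ i - 1 := by simp [hc, h1]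
          have h2 := (hVT ⟨n - 1, hnl⟩).2 i
          omega
        · by_cases h2 : i.1 = q
          · have hcv : c i = A ⟨n - 1, hnl⟩ i + 1 := by simp [hc, h1, h2, hqp]
            have hieq : i = ⟨q, hq⟩ := Fin.ext h2
            subst hieq
            omega
          · have hcv : c i = A ⟨n - 1, hnl⟩ i := by simp [hc, h1, h2, hqp]
            rw [hcv]; exact (hVT _).2 i
    have hkey : ∀ i : Fin n, ∀ m, PS c m ≤ PS (A i) m ∧ PS (A i) m ≤ PS c m + 1 := by
      intro i m
      have hP := hPSc m
      have hch := hchain i ⟨n - 1, hnl⟩ (hilast i) m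
      by_cases hm : p < m ∧ m ≤ q
      · have := hsq m (hfree m hm.1 hm.2) i
        rw [if_pos hm] at hP; omega
      · rw [if_neg hm] at hP; omega
    have hstrict : ∀ i : Fin n, PS c (p + 1) < PS (A i) (p + 1) := by
      intro i
      have hP := hPSc (p + 1)
      rw [if_pos (by omega)] at hP
      have := hsq (p + 1) (hfree (p + 1) (by omega) (by omega)) i
      omega
    have hlex : ∀ i : Fin n, lexGT (A i) c := fun i =>
      lexGT_of_PS (fun m _ => (hkey i m).1) (ne_of_PS (Nat.ne_of_gt (hstrict i)))
    exact hext c hcVT (fun i => Or.inl ⟨hlex i, sorted_of_PS (fun m _ _ => hkey i m)⟩)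
      (fun i => (lexGT_ne (hlex i)).symm)
  -- up move
  have hup : ∀ p q : ℕ, ∀ hp : p < n, ∀ hq : q < n, p < q →
      (∀ m, p < m → m ≤ q → PS (A ⟨0, hn0⟩) m = PS (A ⟨n - 1, hnl⟩) m) →
      1 ≤ A ⟨0, hn0⟩ ⟨q, hq⟩ → A ⟨0, hn0⟩ ⟨p, hp⟩ < α ⟨p, hp⟩ → False := by
    intro p q hp hq hpq hfree hq1 hpα
    have hqp : ¬ q = p := by omega
    set c : Fin n → ℕ := fun i =>
      if i.1 = p then A ⟨0, hn0⟩ i + 1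
      else if i.1 = q then A ⟨0, hn0⟩ i - 1 else A ⟨0, hn0⟩ i with hc
    have hPSc : ∀ m, PS c m = PS (A ⟨0, hn0⟩) m + (if p < m ∧ m ≤ q then 1 else 0) := by
      intro m
      induction m with
      | zero => simp [PS_zero]
      | succ m ih =>
        by_cases hm : m < n
        · rw [PS_succ c hm, PS_succ (A ⟨0, hn0⟩) hm]
          have hcm : c ⟨m, hm⟩ + (if m = q then 1 else 0)
              = A ⟨0, hn0⟩ ⟨m, hm⟩ + (if m = p then 1 else 0) := by
            by_cases h1 : m = p
            · have hcv : c ⟨m, hm⟩ = A ⟨0, hn0⟩ ⟨m, hm⟩ + 1 := by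
                simp [hc, h1]
              have h2 : ¬ (m = q) := by omega
              rw [if_pos h1, if_neg h2, hcv]
            · by_cases h2 : m = q
              · have hcv : c ⟨m, hm⟩ = A ⟨0, hn0⟩ ⟨m, hm⟩ - 1 := by
                  simp [hc, h1, h2, hqp]
                have h3 : 1 ≤ A ⟨0, hn0⟩ ⟨m, hm⟩ := by
                  subst h2; exact hq1
                rw [if_neg h1, if_pos h2, hcv]; omega
              · have hcv : c ⟨m, hm⟩ = A ⟨0, hn0⟩ ⟨m, hm⟩ := by
                  simp [hc, h1, h2, hqp]
                rw [if_neg h1, if_neg h2, hcv]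
          have hind : (if p < m ∧ m ≤ q then 1 else 0) + (if m = p then 1 else 0)
              = (if p < m + 1 ∧ m + 1 ≤ q then 1 else 0) + (if m = q then 1 else 0) := by
            split_ifs <;> omega
          omega
        · rw [PS_succ_ge c hm, PS_succ_ge _ hm]
          have h1 : (if p < m ∧ m ≤ q then 1 else 0) = 0 := by
            rw [if_neg]; omega
          have h2 : (if p < m + 1 ∧ m + 1 ≤ q then 1 else 0) = 0 := by
            rw [if_neg]; omega
          omega
    have hcVT : c ∈ VT n d α := by
      constructor
      · rw [sum_univ]
        have h0 := hPSc n
        rw [if_neg (by omega)] at h0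
        have := hPSd ⟨0, hn0⟩
        omega
      · intro i
        by_cases h1 : i.1 = p
        · have hcv : c i = A ⟨0, hn0⟩ i + 1 := by simp [hc, h1]
          have hieq : i = ⟨p, hp⟩ := Fin.ext h1
          subst hieq
          omega
        · by_cases h2 : i.1 = q
          · have hcv : c i = A ⟨0, hn0⟩ i - 1 := by simp [hc, h1, h2, hqp]
            have h3 := (hVT ⟨0, hn0⟩).2 i
            omega
          · have hcv : c i = A ⟨0, hn0⟩ i := by simp [hc, h1, h2, hqp]
            rw [hcv]; exact (hVT _).2 i
    have hkey : ∀ i : Fin n, ∀ m, PS (A i) m ≤ PS c m ∧ PS c m ≤ PS (A i) m + 1 := by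
      intro i m
      have hP := hPSc m
      have hch := hchain ⟨0, hn0⟩ i (hzle i) m
      by_cases hm : p < m ∧ m ≤ q
      · have h1 := hsq m (hfree m hm.1 hm.2) i
        have h2 := hfree m hm.1 hm.2
        rw [if_pos hm] at hP; omega
      · rw [if_neg hm] at hP; omega
    have hstrict : ∀ i : Fin n, PS (A i) (p + 1) < PS c (p + 1) := by
      intro i
      have hP := hPSc (p + 1)
      rw [if_pos (by omega)] at hP
      have h1 := hsq (p + 1) (hfree (p + 1) (by omega) (by omega)) i
      have h2 := hfree (p + 1) (by omega) (by omega)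
      omega
    have hlex : ∀ i : Fin n, lexGT c (A i) := fun i =>
      lexGT_of_PS (fun m _ => (hkey i m).1) (ne_of_PS (Nat.ne_of_gt (hstrict i)))
    exact hext c hcVT (fun i => Or.inr ⟨hlex i, sorted_of_PS (fun m _ _ => hkey i m)⟩)
      (fun i => lexGT_ne (hlex i))
  -- full cover: every position 1 ≤ m < n has PS (A last) m + 1 = PS (A 0) m
  have cover : ∀ m, 1 ≤ m → m < n → PS (A ⟨n - 1, hnl⟩) m + 1 = PS (A ⟨0, hn0⟩) m := by
    intro m0 hm1 hm2
    by_contra hcov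
    have hfree0 : PS (A ⟨0, hn0⟩) m0 = PS (A ⟨n - 1, hnl⟩) m0 := by
      have := hchain ⟨0, hn0⟩ ⟨n - 1, hnl⟩ (hilast _) m0; omega
    set j := Nat.findGreatest (fun g => PS (A ⟨0, hn0⟩) g ≠ PS (A ⟨n - 1, hnl⟩) g) m0 with hjdef
    have hjle : j ≤ m0 := Nat.findGreatest_le m0
    have hjfree : ∀ m, j < m → m ≤ m0 → PS (A ⟨0, hn0⟩) m = PS (A ⟨n - 1, hnl⟩) m := by
      intro m h1 h2
      by_contra h3
      have h4 := Nat.le_findGreatest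
        (P := fun g => PS (A ⟨0, hn0⟩) g ≠ PS (A ⟨n - 1, hnl⟩) g) h2 h3
      rw [← hjdef] at h4
      omega
    have hK : ∃ k', m0 < k' ∧ (PS (A ⟨0, hn0⟩) k' ≠ PS (A ⟨n - 1, hnl⟩) k' ∨ k' = n) :=
      ⟨n, by omega, Or.inr rfl⟩
    set k := Nat.find hK with hkdef
    obtain ⟨hk1, hk2⟩ := Nat.find_spec hK
    have hkfree : ∀ m, m0 < m → m < k → PS (A ⟨0, hn0⟩) m = PS (A ⟨n - 1, hnl⟩) m := by
      intro m h1 h2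
      have h3 := Nat.find_min hK h2
      push_neg at h3
      exact (h3 h1).1
    have hkn : k ≤ n := Nat.find_le ⟨by omega, Or.inr rfl⟩
    have hgapfree : ∀ m, j < m → m < k → PS (A ⟨0, hn0⟩) m = PS (A ⟨n - 1, hnl⟩) m := by
      intro m h1 h2
      rcases Nat.lt_or_ge m0 m with h3 | h3
      · exact hkfree m h3 h2
      · by_cases he : m = m0
        · rw [he]; exact hfree0
        · exact hjfree m h1 (by omega)
    have hfreen : PS (A ⟨0, hn0⟩) n = PS (A ⟨n - 1, hnl⟩) n := by
      rw [hPSd, hPSd]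
    by_cases hj0 : PS (A ⟨0, hn0⟩) j = PS (A ⟨n - 1, hnl⟩) j
    · -- j is free: then all m ≤ m0 are free
      have hfree_le : ∀ m, m ≤ m0 → PS (A ⟨0, hn0⟩) m = PS (A ⟨n - 1, hnl⟩) m := by
        intro m hm
        by_contra h3
        have h4 := Nat.findGreatest_spec
          (P := fun g => PS (A ⟨0, hn0⟩) g ≠ PS (A ⟨n - 1, hnl⟩) g) hm h3
        rw [← hjdef] at h4
        exact h4 hj0
      by_cases hkf : PS (A ⟨0, hn0⟩) k = PS (A ⟨n - 1, hnl⟩) k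
      · -- k = n and everything is free: A 0 = A last, contradiction
        have hkeqn : k = n := by
          rcases hk2 with h | h
          · exact absurd hkf h
          · exact h
        have hA0free : ∀ m, m ≤ n → PS (A ⟨0, hn0⟩) m = PS (A ⟨n - 1, hnl⟩) m := by
          intro m hm
          rcases Nat.lt_or_ge m k with h | h
          · rcases Nat.lt_or_ge m0 m with h3 | h3
            · exact hkfree m h3 h
            · exact hfree_le m h3
          · have : m = n := by omega
            rw [this]; exact hfreen
        exact hAne ⟨0, hn0⟩ ⟨n - 1, hnl⟩ (by simp [Fin.lt_def]; omega) (eq_of_PS hA0free)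
      · -- k is not free, k < n; look at entry k-1
        have hkltn : k < n := by
          have : k ≠ n := fun h => hkf (by rw [h]; exact hfreen)
          omega
        have hek : k - 1 < n := by omega
        have hkval : PS (A ⟨0, hn0⟩) k = PS (A ⟨n - 1, hnl⟩) k + 1 := by
          have := hchain ⟨0, hn0⟩ ⟨n - 1, hnl⟩ (hilast _) k; omega
        have hfk1 : PS (A ⟨0, hn0⟩) (k - 1) = PS (A ⟨n - 1, hnl⟩) (k - 1) := by
          rcases Nat.lt_or_ge m0 (k - 1) with h3 | h3
          · exact hkfree (k - 1) h3 (by omega)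
          · exact hfree_le (k - 1) h3
        have hentry : A ⟨0, hn0⟩ ⟨k - 1, hek⟩ = A ⟨n - 1, hnl⟩ ⟨k - 1, hek⟩ + 1 := by
          have h1 := PS_succ (A ⟨0, hn0⟩) hek
          have h2 := PS_succ (A ⟨n - 1, hnl⟩) hek
          rw [show k - 1 + 1 = k by omega] at h1 h2
          omega
        have hlt : A ⟨n - 1, hnl⟩ ⟨k - 1, hek⟩ < α ⟨k - 1, hek⟩ := by
          have := (hVT ⟨0, hn0⟩).2 ⟨k - 1, hek⟩
          have := hαd ⟨k - 1, hek⟩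
          omega
        have hfree_gap : ∀ m, m ≤ k - 1 → PS (A ⟨0, hn0⟩) m = PS (A ⟨n - 1, hnl⟩) m := by
          intro m hm
          rcases Nat.lt_or_ge m0 m with h3 | h3
          · exact hkfree m h3 (by omega)
          · exact hfree_le m h3
        by_cases hP : ∃ p, ∃ hpn : p < n, p < k - 1 ∧ 1 ≤ A ⟨n - 1, hnl⟩ ⟨p, hpn⟩
        · obtain ⟨p, hpn, hpk, hp1⟩ := hP
          exact hdown p (k - 1) hpn hek hpk
            (fun m hm1 hm2 => hfree_gap m hm2) hp1 hlt
        · -- all entries of A last below k-1 vanish, hence so do those of A 0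
          push_neg at hP
          have hq1 : 1 ≤ A ⟨0, hn0⟩ ⟨k - 1, hek⟩ := by omega
          have h0n : (0 : ℕ) < n := hn0
          have h0e : (0 : ℕ) < k - 1 := by omega
          have hA00 : A ⟨0, hn0⟩ ⟨0, hn0⟩ = 0 := by
            have hz := hP 0 hn0 h0e
            have h1 := PS_succ (A ⟨0, hn0⟩) hn0
            have h2 := PS_succ (A ⟨n - 1, hnl⟩) hn0
            simp only [Nat.zero_add] at h1 h2
            have h3 := hfree_gap 1 (by omega)
            have h4 : PS (A ⟨0, hn0⟩) 0 = 0 := PS_zero _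
            have h5 : PS (A ⟨n - 1, hnl⟩) 0 = 0 := PS_zero _
            omega
          exact hup 0 (k - 1) hn0 hek (by omega)
            (fun m hm1 hm2 => hfree_gap m hm2) hq1 (by rw [hA00]; exact hαpos _)
    · -- j is not free: j ≥ 1, entry at j
      have hjpos : 1 ≤ j := by
        by_contra h
        have h0 : j = 0 := by omega
        rw [h0] at hj0
        exact hj0 (by simp [PS_zero])
      have hjlt : j < m0 := by
        rcases Nat.eq_or_lt_of_le hjle with h | h
        · exfalso; rw [h] at hj0; exact hj0 hfree0
        · exact h
      have hjn : j < n := by omega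
      have hjval : PS (A ⟨0, hn0⟩) j = PS (A ⟨n - 1, hnl⟩) j + 1 := by
        have := hchain ⟨0, hn0⟩ ⟨n - 1, hnl⟩ (hilast _) j; omega
      have hfj1 : PS (A ⟨0, hn0⟩) (j + 1) = PS (A ⟨n - 1, hnl⟩) (j + 1) :=
        hgapfree (j + 1) (by omega) (by omega)
      have hentryj : A ⟨n - 1, hnl⟩ ⟨j, hjn⟩ = A ⟨0, hn0⟩ ⟨j, hjn⟩ + 1 := by
        have h1 := PS_succ (A ⟨0, hn0⟩) hjn
        have h2 := PS_succ (A ⟨n - 1, hnl⟩) hjn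
        omega
      by_cases hQ : ∃ q, ∃ hqn : q < n, j < q ∧ q < k ∧ A ⟨n - 1, hnl⟩ ⟨q, hqn⟩ < α ⟨q, hqn⟩
      · obtain ⟨q, hqn, h1, h2, h3⟩ := hQ
        exact hdown j q hjn hqn h1
          (fun m hm1 hm2 => hgapfree m hm1 (by omega)) (by omega) h3
      · push_neg at hQ
        by_cases hkf : PS (A ⟨0, hn0⟩) k = PS (A ⟨n - 1, hnl⟩) k
        · -- k = n : up-move at (j, j+1)
          have hkeqn : k = n := by
            rcases hk2 with h | h
            · exact absurd hkf h
            · exact h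
          have hj1n : j + 1 < n := by omega
          have hAlast1 : α ⟨j + 1, hj1n⟩ ≤ A ⟨n - 1, hnl⟩ ⟨j + 1, hj1n⟩ :=
            hQ (j + 1) hj1n (by omega) (by omega)
          have hfj2 : PS (A ⟨0, hn0⟩) (j + 2) = PS (A ⟨n - 1, hnl⟩) (j + 2) := by
            rcases Nat.lt_or_ge (j + 2) k with h | h
            · exact hgapfree (j + 2) (by omega) h
            · have : j + 2 = k := by omega
              rw [this]; exact hkf
          have hentry1 : A ⟨0, hn0⟩ ⟨j + 1, hj1n⟩ = A ⟨n - 1, hnl⟩ ⟨j + 1, hj1n⟩ := by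
            have h1 := PS_succ (A ⟨0, hn0⟩) hj1n
            have h2 := PS_succ (A ⟨n - 1, hnl⟩) hj1n
            rw [show j + 1 + 1 = j + 2 by omega] at h1 h2
            omega
          have hup1 : 1 ≤ A ⟨0, hn0⟩ ⟨j + 1, hj1n⟩ := by
            have := hαpos ⟨j + 1, hj1n⟩; omega
          have hupα : A ⟨0, hn0⟩ ⟨j, hjn⟩ < α ⟨j, hjn⟩ := by
            have := (hVT ⟨n - 1, hnl⟩).2 ⟨j, hjn⟩; omega
          exact hup j (j + 1) hjn hj1n (by omega)
            (fun m hm1 hm2 => hgapfree m hm1 (by omega)) hup1 hupα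
        · -- k not free, k < n: entry k-1 exceeds α, contradiction with VT
          have hkltn : k < n := by
            have : k ≠ n := fun h => hkf (by rw [h]; exact hfreen)
            omega
          have hek : k - 1 < n := by omega
          have hkval : PS (A ⟨0, hn0⟩) k = PS (A ⟨n - 1, hnl⟩) k + 1 := by
            have := hchain ⟨0, hn0⟩ ⟨n - 1, hnl⟩ (hilast _) k; omega
          have hfk1 : PS (A ⟨0, hn0⟩) (k - 1) = PS (A ⟨n - 1, hnl⟩) (k - 1) :=
            hgapfree (k - 1) (by omega) (by omega)
          have hentryk : A ⟨0, hn0⟩ ⟨k - 1, hek⟩ = A ⟨n - 1, hnl⟩ ⟨k - 1, hek⟩ + 1 := by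
            have h1 := PS_succ (A ⟨0, hn0⟩) hek
            have h2 := PS_succ (A ⟨n - 1, hnl⟩) hek
            rw [show k - 1 + 1 = k by omega] at h1 h2
            omega
          have hAk : α ⟨k - 1, hek⟩ ≤ A ⟨n - 1, hnl⟩ ⟨k - 1, hek⟩ :=
            hQ (k - 1) hek (by omega) (by omega)
          have := (hVT ⟨0, hn0⟩).2 ⟨k - 1, hek⟩
          omega
  -- telescoping/counting: sigSet(A0,A1) is a single position ms
  have hminlt : ∀ i : ℕ, min i (n - 1) < n := fun i => by omega
  have hBmono : ∀ i : ℕ, (⟨min i (n - 1), hminlt i⟩ : Fin n) ≤ ⟨min (i + 1) (n - 1), hminlt (i + 1)⟩ :=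
    fun i => by simp only [Fin.le_def]; omega
  have hδsum : ∀ m, 1 ≤ m → m < n →
      ∑ i ∈ Finset.range (n - 1),
        (PS (A ⟨min i (n - 1), hminlt i⟩) m - PS (A ⟨min (i + 1) (n - 1), hminlt (i + 1)⟩) m) = 1 := by
    intro m h1 h2
    have htel : ∀ N : ℕ,
        ∑ i ∈ Finset.range N,
          (PS (A ⟨min i (n - 1), hminlt i⟩) m - PS (A ⟨min (i + 1) (n - 1), hminlt (i + 1)⟩) m)
        = PS (A ⟨min 0 (n - 1), hminlt 0⟩) m - PS (A ⟨min N (n - 1), hminlt N⟩) m := by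
      intro N
      induction N with
      | zero => simp
      | succ N ih =>
        rw [Finset.sum_range_succ, ih]
        have g1 := hchain _ _ (hBmono N) m
        have g2 := hchain ⟨min 0 (n - 1), hminlt 0⟩ ⟨min N (n - 1), hminlt N⟩
          (by simp only [Fin.le_def]; omega) m
        omega
    rw [htel (n - 1)]
    have hcov := cover m h1 h2
    have e0 : (⟨min 0 (n - 1), hminlt 0⟩ : Fin n) = ⟨0, hn0⟩ := Fin.ext (by simp)
    have e1 : (⟨min (n - 1) (n - 1), hminlt (n - 1)⟩ : Fin n) = ⟨n - 1, hnl⟩ := Fin.ext (by simp)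
    rw [e0, e1]
    omega
  have hcol : ∀ i : ℕ, i < n - 1 →
      1 ≤ ∑ m ∈ Finset.Icc 1 (n - 1),
        (PS (A ⟨min i (n - 1), hminlt i⟩) m - PS (A ⟨min (i + 1) (n - 1), hminlt (i + 1)⟩) m) := by
    intro i hi
    by_contra hcon
    have hs0 : ∑ m ∈ Finset.Icc 1 (n - 1),
        (PS (A ⟨min i (n - 1), hminlt i⟩) m - PS (A ⟨min (i + 1) (n - 1), hminlt (i + 1)⟩) m) = 0 := by
      omega
    have hz := Finset.sum_eq_zero_iff.1 hs0
    have heq : A ⟨min i (n - 1), hminlt i⟩ = A ⟨min (i + 1) (n - 1), hminlt (i + 1)⟩ := by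
      apply eq_of_PS
      intro m hm
      rcases Nat.eq_zero_or_pos m with h0 | h0
      · rw [h0]; simp [PS_zero]
      rcases Nat.lt_or_ge m n with hmn | hmn
      · have hd := hz m (Finset.mem_Icc.2 ⟨h0, by omega⟩)
        have := hchain _ _ (hBmono i) m
        omega
      · have : m = n := by omega
        rw [this, hPSd, hPSd]
    exact hAne _ _ (by simp only [Fin.lt_def]; omega) heq
  have htot : ∑ i ∈ Finset.range (n - 1),
      (∑ m ∈ Finset.Icc 1 (n - 1),
        (PS (A ⟨min i (n - 1), hminlt i⟩) m - PS (A ⟨min (i + 1) (n - 1), hminlt (i + 1)⟩) m))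
      = n - 1 := by
    rw [Finset.sum_comm]
    rw [Finset.sum_congr rfl (fun m hm => hδsum m (Finset.mem_Icc.1 hm).1
      (by have := (Finset.mem_Icc.1 hm).2; omega))]
    simp [Nat.card_Icc]
  have h0mem : (0 : ℕ) ∈ Finset.range (n - 1) := Finset.mem_range.2 (by omega)
  have hc0 : ∑ m ∈ Finset.Icc 1 (n - 1),
      (PS (A ⟨min 0 (n - 1), hminlt 0⟩) m - PS (A ⟨min (0 + 1) (n - 1), hminlt (0 + 1)⟩) m) = 1 := by
    rw [← Finset.add_sum_erase _ _ h0mem] at htot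
    have hcard : ((Finset.range (n - 1)).erase 0).card = n - 2 := by
      rw [Finset.card_erase_of_mem h0mem, Finset.card_range]; omega
    have hrest : n - 2 ≤ ∑ i ∈ (Finset.range (n - 1)).erase 0,
        (∑ m ∈ Finset.Icc 1 (n - 1),
          (PS (A ⟨min i (n - 1), hminlt i⟩) m - PS (A ⟨min (i + 1) (n - 1), hminlt (i + 1)⟩) m)) := by
      calc n - 2 = ((Finset.range (n - 1)).erase 0).card := hcard.symm
        _ = ((Finset.range (n - 1)).erase 0).card • 1 := by simp
        _ ≤ _ := Finset.card_nsmul_le_sum _ _ 1 (fun i hi =>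
            hcol i (Finset.mem_range.1 (Finset.mem_of_mem_erase hi)))
    have hfirst := hcol 0 (by omega)
    omega
  have e0 : (⟨min 0 (n - 1), hminlt 0⟩ : Fin n) = ⟨0, hn0⟩ := Fin.ext (by simp)
  have e1 : (⟨min (0 + 1) (n - 1), hminlt (0 + 1)⟩ : Fin n) = ⟨1, hn1⟩ := Fin.ext (by simp; omega)
  rw [e0, e1] at hc0
  -- extract the unique position ms
  obtain ⟨ms, hms_mem, hms⟩ : ∃ ms ∈ Finset.Icc 1 (n - 1),
      PS (A ⟨0, hn0⟩) ms - PS (A ⟨1, hn1⟩) ms ≠ 0 := by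
    by_contra h
    push_neg at h
    have := Finset.sum_eq_zero h
    omega
  have hm_range := Finset.mem_Icc.1 hms_mem
  have hms1 : PS (A ⟨1, hn1⟩) ms + 1 = PS (A ⟨0, hn0⟩) ms := by
    have hch := hchain ⟨0, hn0⟩ ⟨1, hn1⟩ (by simp [Fin.le_def]) ms
    omega
  have hrest0 : ∀ m, 1 ≤ m → m < n → m ≠ ms → PS (A ⟨0, hn0⟩) m = PS (A ⟨1, hn1⟩) m := by
    intro m hm1 hm2 hne'
    rw [← Finset.add_sum_erase _ _ hms_mem] at hc0
    have hsz : ∑ m' ∈ (Finset.Icc 1 (n - 1)).erase ms,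
        (PS (A ⟨0, hn0⟩) m' - PS (A ⟨1, hn1⟩) m') = 0 := by
      omega
    have hz := Finset.sum_eq_zero_iff.1 hsz m
      (Finset.mem_erase.2 ⟨hne', Finset.mem_Icc.2 ⟨hm1, by omega⟩⟩)
    have hch := hchain ⟨0, hn0⟩ ⟨1, hn1⟩ (by simp [Fin.le_def]) m
    omega
  -- relations for a'
  have hsort' : sortedPair (A ⟨n - 1, hnl⟩) a' := hsort
  have ha'ch : ∀ m, PS a' m ≤ PS (A ⟨n - 1, hnl⟩) m ∧ PS (A ⟨n - 1, hnl⟩) m ≤ PS a' m + 1 :=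
    sortedPair_PS hsort'
  have hΔ' : ∀ m, 1 ≤ m → m < n →
      ((PS (A ⟨1, hn1⟩) m + 1 = PS (A ⟨0, hn0⟩) m) ↔ (PS a' m + 1 = PS (A ⟨n - 1, hnl⟩) m)) := by
    intro m h1 h2
    have ht := Finset.ext_iff.1 hΔ ⟨m - 1, by omega⟩
    rw [mem_sigSet, mem_sigSet] at ht
    simp only [Fin.val_mk] at ht
    rw [show m - 1 + 1 = m by omega] at ht
    exact ht
  have ha'sig : ∀ m, 1 ≤ m → m < n →
      PS a' m + (if m = ms then 1 else 0) = PS (A ⟨n - 1, hnl⟩) m := by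
    intro m h1 h2
    by_cases he : m = ms
    · rw [if_pos he, he]
      exact (hΔ' ms (by omega) (by omega)).1 hms1
    · rw [if_neg he]
      have hnot : ¬ (PS (A ⟨1, hn1⟩) m + 1 = PS (A ⟨0, hn0⟩) m) := by
        have := hrest0 m h1 h2 he; omega
      have hiff := hΔ' m h1 h2
      have hch := ha'ch m
      have h3 : ¬ (PS a' m + 1 = PS (A ⟨n - 1, hnl⟩) m) := fun hr => hnot (hiff.2 hr)
      omega
  have ha'full : ∀ m, 1 ≤ m → m < n → PS a' m + 1 = PS (A ⟨1, hn1⟩) m := by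
    intro m h1 h2
    have hs := ha'sig m h1 h2
    have hc := cover m h1 h2
    by_cases he : m = ms
    · subst he
      rw [if_pos rfl] at hs
      omega
    · rw [if_neg he] at hs
      have h3 := hrest0 m h1 h2 he
      omega
  have hsig_ms : PS a' ms + 1 = PS (A ⟨n - 1, hnl⟩) ms := by
    have := ha'sig ms (by omega) (by omega)
    rw [if_pos rfl] at this
    exact this
  -- the new family
  set NF : Fin n → Fin n → ℕ :=
    fun i : Fin n => if h : i.1 + 1 < n then A ⟨i.1 + 1, h⟩ else a' with hNF
  have hNFlt : ∀ (i : Fin n) (h : i.1 + 1 < n), NF i = A ⟨i.1 + 1, h⟩ := by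
    intro i h; simp only [hNF]; rw [dif_pos h]
  have hNFge : ∀ (i : Fin n), ¬ (i.1 + 1 < n) → NF i = a' := by
    intro i h; simp only [hNF]; rw [dif_neg h]
  have hNFlast : NF ⟨n - 1, hnl⟩ = a' := hNFge _ (by simp; omega)
  -- lex chain for the new family
  have hlexN : ∀ i j : Fin n, i < j → lexGT (NF i) (NF j) := by
    intro i j hij
    have hij' : i.1 < j.1 := Fin.lt_def.1 hij
    have hi : i.1 + 1 < n := by have := j.2; omega
    rw [hNFlt i hi]
    by_cases hj : j.1 + 1 < n
    · rw [hNFlt j hj]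
      exact hdec ⟨i.1 + 1, hi⟩ ⟨j.1 + 1, hj⟩ (by simp only [Fin.lt_def]; omega)
    · rw [hNFge j hj]
      apply lexGT_of_PS
      · intro m hm
        rcases Nat.eq_zero_or_pos m with h0 | h0
        · rw [h0]; simp [PS_zero]
        rcases Nat.lt_or_ge m n with hmn | hmn
        · have h1 := (ha'ch m).1
          have h2 := (hchain ⟨i.1 + 1, hi⟩ ⟨n - 1, hnl⟩ (hilast _) m).1
          omega
        · have hmn' : m = n := by omega
          rw [hmn', hPSd, ha'd]
      · apply ne_of_PS (m := ms)
        have h2 := (hchain ⟨i.1 + 1, hi⟩ ⟨n - 1, hnl⟩ (hilast _) ms).1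
        omega
  -- sorted pairs for the new family
  have hsortN : ∀ i j : Fin n, i < j → sortedPair (NF i) (NF j) := by
    intro i j hij
    have hij' : i.1 < j.1 := Fin.lt_def.1 hij
    have hi : i.1 + 1 < n := by have := j.2; omega
    rw [hNFlt i hi]
    by_cases hj : j.1 + 1 < n
    · rw [hNFlt j hj]
      exact hsorted _ _ (by simp only [Fin.lt_def]; omega)
    · rw [hNFge j hj]
      apply sorted_of_PS
      intro m h0 hmn
      rcases Nat.lt_or_ge m n with h | h
      · have h1 := ha'full m h0 h
        have h2 := hchain ⟨1, hn1⟩ ⟨i.1 + 1, hi⟩ (by simp only [Fin.le_def]; omega) m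
        have h3 := (hchain ⟨i.1 + 1, hi⟩ ⟨n - 1, hnl⟩ (hilast _) m).1
        have h4 := (ha'ch m).1
        omega
      · have : m = n := by omega
        rw [this, hPSd, ha'd]
        omega
  -- the new family is a clique
  have hclN : isClique n d α (Finset.image NF Finset.univ) := by
    constructor
    · intro x hx
      obtain ⟨i, _, rfl⟩ := Finset.mem_image.1 (Finset.mem_coe.1 hx)
      by_cases hi : i.1 + 1 < n
      · rw [hNFlt i hi]; exact hVT _
      · rw [hNFge i hi]; exact ha'
    · intro x hx y hy hxy
      obtain ⟨i, _, rfl⟩ := Finset.mem_image.1 hx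
      obtain ⟨j, _, rfl⟩ := Finset.mem_image.1 hy
      rcases lt_trichotomy i j with h | h | h
      · exact Or.inl ⟨hlexN i j h, hsortN i j h⟩
      · rw [h] at hxy; exact absurd rfl hxy
      · exact Or.inr ⟨hlexN j i h, hsortN j i h⟩
  refine ⟨hlexN, hclN, ?_⟩
  -- maximality of the new clique
  intro T hT hsub
  refine Finset.Subset.antisymm hsub (fun b hb => ?_)
  by_contra hbN
  have hbVT : b ∈ VT n d α := hT.1 (Finset.mem_coe.2 hb)
  have hbd : PS b n = d := by rw [← sum_univ]; exact hbVT.1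
  have hbadj : ∀ i : Fin n, b ≠ NF i ∧ adjG b (NF i) := by
    intro i
    have hmem : NF i ∈ T := hsub (Finset.mem_image_of_mem _ (Finset.mem_univ i))
    have hne' : b ≠ NF i := fun h =>
      hbN (h ▸ Finset.mem_image_of_mem NF (Finset.mem_univ i))
    exact ⟨hne', hT.2 b hb _ hmem hne'⟩
  have hbadjA : ∀ i : Fin n, 1 ≤ i.1 → b ≠ A i ∧ adjG b (A i) := by
    intro i h1
    have hi' : i.1 - 1 < n := by omega
    have h2 : (⟨i.1 - 1, hi'⟩ : Fin n).1 + 1 < n := by simp only [Fin.val_mk]; omega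
    have h := hbadj ⟨i.1 - 1, hi'⟩
    rw [hNFlt _ h2] at h
    have he : (⟨(⟨i.1 - 1, hi'⟩ : Fin n).1 + 1, h2⟩ : Fin n) = i :=
      Fin.ext (by simp only [Fin.val_mk]; omega)
    rw [he] at h
    exact h
  have hba' : b ≠ a' ∧ adjG b a' := by
    have h := hbadj ⟨n - 1, hnl⟩
    rw [hNFlast] at h
    exact h
  have hbA1 := hbadjA ⟨1, hn1⟩ (by simp)
  have hblast := hbadjA ⟨n - 1, hnl⟩ (by simp only [Fin.val_mk]; omega)
  have hadjPS : ∀ y, adjG b y →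
      (∀ m, PS y m ≤ PS b m ∧ PS b m ≤ PS y m + 1) ∨
      (∀ m, PS b m ≤ PS y m ∧ PS y m ≤ PS b m + 1) := by
    intro y h
    rcases h with ⟨_, hs⟩ | ⟨_, hs⟩
    · exact Or.inl (sortedPair_PS hs)
    · exact Or.inr (sortedPair_PS hs)
  have hge : ∀ m, PS a' m ≤ PS b m := by
    intro m
    by_contra hlt
    push_neg at hlt
    have hm0 : m ≠ 0 := by
      intro h; rw [h] at hlt; simp [PS_zero] at hlt
    have hmn : m < n := by
      by_contra h
      rw [PS_stab b (by omega), PS_stab a' (by omega), hbd, ha'd] at hlt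
      omega
    have h1 := ha'full m (by omega) hmn
    rcases hadjPS _ hbA1.2 with h | h
    · have := (h m).1; omega
    · have := (h m).2; omega
  have hle1 : ∀ m, PS b m ≤ PS a' m + 1 := by
    rcases hadjPS _ hba'.2 with h | h
    · exact fun m => (h m).2
    · intro m
      have := (h m).1; omega
  have hms_n : ms < n := by omega
  have hmsge1 : 1 ≤ ms := hm_range.1
  rcases hadjPS _ hblast.2 with hcase | hcase
  · -- b lies above A last: extend the original clique by b, contradiction
    have hbms : PS b ms = PS a' ms + 1 := by
      have h1 := (hcase ms).1
      have h2 := hle1 ms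
      omega
    have hbA0 : ∀ m, PS b m ≤ PS (A ⟨0, hn0⟩) m ∧ PS (A ⟨0, hn0⟩) m ≤ PS b m + 1 := by
      intro m
      rcases Nat.eq_zero_or_pos m with h0 | h0
      · rw [h0]; simp [PS_zero]
      rcases Nat.lt_or_ge m n with hmn | hmn
      · have hc := cover m h0 hmn
        have hs := ha'sig m h0 hmn
        have hg := hge m
        have hl := hle1 m
        by_cases he : m = ms
        · subst he; rw [if_pos rfl] at hs; omega
        · rw [if_neg he] at hs; omega
      · have e1 : PS b m = PS b n := PS_stab b hmn
        have e2 : PS (A ⟨0, hn0⟩) m = PS (A ⟨0, hn0⟩) n := PS_stab _ hmn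
        rw [e1, e2, hbd, hPSd]
        omega
    have hbne0 : b ≠ A ⟨0, hn0⟩ := by
      apply ne_of_PS (m := ms)
      have hc := cover ms hmsge1 hms_n
      omega
    have hadj0 : adjG (A ⟨0, hn0⟩) b :=
      Or.inl ⟨lexGT_of_PS (fun m _ => (hbA0 m).1) hbne0.symm,
        sorted_of_PS (fun m _ _ => hbA0 m)⟩
    apply hext b hbVT
    · intro i
      rcases Nat.eq_zero_or_pos i.1 with h0 | h0
      · have hieq : i = ⟨0, hn0⟩ := Fin.ext h0
        rw [hieq]; exact hadj0
      · exact adjG_symm (hbadjA i h0).2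
    · intro i
      rcases Nat.eq_zero_or_pos i.1 with h0 | h0
      · have hieq : i = ⟨0, hn0⟩ := Fin.ext h0
        rw [hieq]; exact hbne0
      · exact (hbadjA i h0).1
  · -- b lies below A last: b = a' or b = A last, contradiction
    by_cases hbms : PS b ms = PS a' ms + 1
    · apply hblast.1
      apply eq_of_PS
      intro m hm
      rcases Nat.eq_zero_or_pos m with h0 | h0
      · rw [h0]; simp [PS_zero]
      rcases Nat.lt_or_ge m n with hmn | hmn
      · have hs := ha'sig m h0 hmn
        by_cases he : m = ms
        · subst he; rw [if_pos rfl] at hs; omega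
        · rw [if_neg he] at hs
          have h1 := (hcase m).1
          have := hge m
          omega
      · have : m = n := by omega
        rw [this, hbd, hPSd]
    · apply hba'.1
      apply eq_of_PS
      intro m hm
      rcases Nat.eq_zero_or_pos m with h0 | h0
      · rw [h0]; simp [PS_zero]
      rcases Nat.lt_or_ge m n with hmn | hmn
      · have hs := ha'sig m h0 hmn
        have hg := hge m
        have hl := hle1 m
        by_cases he : m = ms
        · subst he
          rw [if_pos rfl] at hs
          have h1 := (hcase m).1
          omega
        · rw [if_neg he] at hs
          have h1 := (hcase m).1
          omega
      · have : m = n := by omega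
        rw [this, hbd, ha'd]
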